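/- arXiv:2106.09466 — 2 statements merged into one kernel-verified Lean document; each statement's English description precedes it below -/
import Mathlib

section
/- Conversely, let f : X → ℝ be convex lower semicontinuous on a locally convex space X, and suppose that for every bounded balanced set B ⊆ X with associated support seminorm p_B on the dual there is C_B ∈ ℝ with f*(T) ≥ p_B(T) + C_B for all T in the dual. Then f is bounded above on every bounded subset of X. -/
open Bornology

open Set Filter Pointwise in
private lemma isVonNBounded_balancedHull_aux
    {X : Type*} [AddCommGroup X] [Module ℝ X] [TopologicalSpace X]
    [IsTopologicalAddGroup X] [ContinuousSMul ℝ X] {B : Set X}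
    (hB : IsVonNBounded ℝ B) : IsVonNBounded ℝ (balancedHull ℝ B) := by
  intro V hV
  have hW : balancedCore ℝ V ∈ nhds (0 : X) := balancedCore_mem_nhds_zero hV
  have hWbal : Balanced ℝ (balancedCore ℝ V) := balancedCore_balanced V
  have habs : Absorbs ℝ (balancedCore ℝ V) B := hB hW
  refine habs.eventually.mono fun a ha => ?_
  have h1 : Balanced ℝ (a • balancedCore ℝ V) := hWbal.smul a
  have h2 : balancedHull ℝ B ⊆ a • balancedCore ℝ V :=
    h1.balancedHull_subset_of_subset ha
  exact h2.trans (Set.smul_set_mono (balancedCore_subset V))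

/-- Conversely, if a real-valued convex lower semicontinuous function `f` on a locally convex
space has a supercoercive convex conjugate (a lower bound `f*(T) ≥ p_B(T) + C_B` for the support
seminorm of each bounded balanced set `B`), then `f` is bounded above on every bounded set. -/
theorem bounded_on_bounded_of_conjugate_supercoercive
    {X : Type*} [AddCommGroup X] [Module ℝ X] [TopologicalSpace X]
    [IsTopologicalAddGroup X] [ContinuousSMul ℝ X] [LocallyConvexSpace ℝ X]
    (f : X → ℝ)
    (hconvex : ConvexOn ℝ Set.univ f)
    (hlsc : LowerSemicontinuous f)
    (hsc : ∀ B : Set X, IsVonNBounded ℝ B → Balanced ℝ B →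
      ∃ C : ℝ, ∀ T : X →L[ℝ] ℝ,
        (⨆ φ ∈ B, ((T φ : EReal))) + (C : EReal) ≤
          ⨆ φ : X, ((T φ : EReal) - (f φ : EReal))) :
    ∀ B : Set X, IsVonNBounded ℝ B → ∃ M : ℝ, ∀ x ∈ B, f x ≤ M := by
  intro B hB
  obtain ⟨C, hC⟩ := hsc (balancedHull ℝ B) (isVonNBounded_balancedHull_aux hB)
    (balancedHull.balanced B)
  refine ⟨-C, fun x hx => ?_⟩
  by_contra hcon
  push_neg at hcon
  -- separate the point (x, -C) from the closed convex epigraph of f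
  have hepi_closed : IsClosed {p : X × ℝ | f p.1 ≤ p.2} := by
    rw [← isOpen_compl_iff, isOpen_iff_mem_nhds]
    rintro ⟨x0, t⟩ ht
    simp only [Set.mem_compl_iff, Set.mem_setOf_eq, not_le] at ht
    have hU : {x' : X | (t + f x0) / 2 < f x'} ∈ nhds x0 := by
      have := hlsc x0 ((t + f x0) / 2) (by linarith)
      exact this
    have hV : Set.Iio ((t + f x0) / 2) ∈ nhds t := Iio_mem_nhds (by linarith)
    refine Filter.mem_of_superset (prod_mem_nhds hU hV) ?_
    rintro ⟨x', t'⟩ ⟨hx', ht'⟩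
    simp only [Set.mem_compl_iff, Set.mem_setOf_eq, not_le]
    exact lt_trans ht' hx'
  have hepi_convex : Convex ℝ {p : X × ℝ | f p.1 ≤ p.2} := by
    have := hconvex.convex_epigraph
    simpa using this
  have hnot : (x, -C) ∉ {p : X × ℝ | f p.1 ≤ p.2} := by
    simp only [Set.mem_setOf_eq, not_le]
    exact hcon
  obtain ⟨g, u, hgu, hux⟩ := geometric_hahn_banach_closed_point hepi_convex hepi_closed hnot
  set a : ℝ := g (0, 1) with ha_def
  have hg_eq : ∀ (φ : X) (s : ℝ), g (φ, s) = g (φ, 0) + s * a := by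
    intro φ s
    have : (φ, s) = (φ, (0 : ℝ)) + s • ((0 : X), (1 : ℝ)) := by
      simp [Prod.ext_iff]
    rw [this, map_add, map_smul, smul_eq_mul]
  have hfx : g (x, f x) < u := hgu _ (by simp)
  have hxt : u < g (x, -C) := hux
  rw [hg_eq] at hfx hxt
  -- deduce a < 0
  have ha : a < 0 := by nlinarith
  set b : ℝ := -a with hb_def
  have hb : 0 < b := by linarith
  set S : X →L[ℝ] ℝ := b⁻¹ • (g.comp (ContinuousLinearMap.inl ℝ X ℝ)) with hS_def
  have hS : ∀ φ : X, S φ = b⁻¹ * g (φ, 0) := fun φ => rfl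
  have hbi : 0 < b⁻¹ := inv_pos.2 hb
  have hane : a ≠ 0 := ne_of_lt ha
  have hab : a * b⁻¹ = -1 := by
    rw [hb_def, inv_neg]
    field_simp
  have hbound : ∀ φ : X, S φ - f φ ≤ u / b := by
    intro φ
    have h1 : g (φ, 0) + f φ * a < u := by
      have := hgu (φ, f φ) (by simp)
      rwa [hg_eq] at this
    have e : S φ - f φ = b⁻¹ * (g (φ, 0) + f φ * a) := by
      rw [hS]
      linear_combination (-(f φ)) * hab
    rw [e, div_eq_inv_mul]
    exact mul_le_mul_of_nonneg_left h1.le hbi.le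
  have hSx : u / b < S x + C := by
    have e : S x + C = b⁻¹ * (g (x, 0) + -C * a) := by
      rw [hS]
      linear_combination C * hab
    rw [e, div_eq_inv_mul]
    exact mul_lt_mul_of_pos_left hxt hbi
  -- now use the hypothesis with the functional S
  have h1 : (⨆ φ : X, ((S φ : EReal) - (f φ : EReal))) ≤ ((u / b : ℝ) : EReal) := by
    refine iSup_le fun φ => ?_
    rw [← EReal.coe_sub]
    exact_mod_cast hbound φ
  have h2 : ((S x : ℝ) : EReal) ≤ ⨆ φ ∈ balancedHull ℝ B, ((S φ : ℝ) : EReal) :=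
    le_biSup (fun φ : X => ((S φ : ℝ) : EReal)) (subset_balancedHull (𝕜 := ℝ) hx)
  have h3 : ((S x : ℝ) : EReal) + (C : EReal) ≤ ((u / b : ℝ) : EReal) :=
    le_trans (add_le_add_left h2 _) ((hC S).trans h1)
  rw [← EReal.coe_add, EReal.coe_le_coe_iff] at h3
  linarith
end

section
/- Let ν be a centered Gaussian measure on a locally convex space X with Cameron–Martin space H(ν) and reproducing kernel Hilbert space X′_ν, and let R_ν : X′_ν → X be defined by K(R_ν T) = ∫ K(ψ) T(ψ) dν(ψ) for all K ∈ X′. Then R_ν is an isometric isomorphism from X′_ν onto H(ν). -/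
open MeasureTheory

set_option linter.unusedSectionVars false
set_option maxHeartbeats 1000000

variable {E : Type*} [NormedAddCommGroup E] [NormedSpace ℝ E] [CompleteSpace E]
  [SecondCountableTopology E] [MeasurableSpace E] [BorelSpace E]

namespace CMaux
open Filter Topology
variable (ν : Measure E) [IsProbabilityMeasure ν]

-- bridge: L2 inner product of toLp's vs integrals
lemma inner_toLp (hL2 : ∀ T : E →L[ℝ] ℝ, MemLp (fun x => T x) 2 ν)
    (T : E →L[ℝ] ℝ) (f : Lp ℝ 2 ν) :
    (inner ℝ ((hL2 T).toLp _) f : ℝ) = ∫ x, T x * f x ∂ν := by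
  rw [L2.inner_def]
  refine integral_congr_ae ?_
  filter_upwards [(hL2 T).coeFn_toLp] with x hx
  simp [hx, RCLike.inner_apply, conj_trivial, mul_comm]

lemma integrable_mul (T : E →L[ℝ] ℝ) (hT : MemLp (fun x => T x) 2 ν) (f : Lp ℝ 2 ν) :
    Integrable (fun x => T x * f x) ν := by
  have := L2.integrable_inner (𝕜 := ℝ) (hT.toLp _) f
  refine this.congr ?_
  filter_upwards [hT.coeFn_toLp] with x hx
  simp [hx, RCLike.inner_apply, conj_trivial, mul_comm]

lemma norm_sq_toLp (hL2 : ∀ T : E →L[ℝ] ℝ, MemLp (fun x => T x) 2 ν)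
    (T : E →L[ℝ] ℝ) : ‖(hL2 T).toLp _‖ ^ 2 = ∫ x, (T x) ^ 2 ∂ν := by
  rw [← real_inner_self_eq_norm_sq, L2.inner_def]
  refine integral_congr_ae ?_
  filter_upwards [(hL2 T).coeFn_toLp] with x hx
  simp [hx, RCLike.inner_apply, conj_trivial, sq]

-- Cauchy-Schwarz with absolute values
lemma integral_abs_mul_le (a b : Lp ℝ 2 ν) :
    ∫ x, |a x * b x| ∂ν ≤ ‖a‖ * ‖b‖ := by
  have h1 : ∫ x, |a x * b x| ∂ν = (inner ℝ |a| |b| : ℝ) := by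
    rw [L2.inner_def]
    refine integral_congr_ae ?_
    filter_upwards [Lp.coeFn_abs a, Lp.coeFn_abs b] with x hx hy
    simp [hx, hy, RCLike.inner_apply, conj_trivial, abs_mul, mul_comm]
  rw [h1]
  calc (inner ℝ |a| |b| : ℝ) ≤ ‖|a|‖ * ‖|b|‖ := real_inner_le_norm _ _
  _ = ‖a‖ * ‖b‖ := by rw [norm_abs_eq_norm, norm_abs_eq_norm]


noncomputable def Phi (hL2 : ∀ T : E →L[ℝ] ℝ, MemLp (fun x => T x) 2 ν) :
    (E →L[ℝ] ℝ) →ₗ[ℝ] Lp ℝ 2 ν where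
  toFun T := (hL2 T).toLp _
  map_add' T T' := by
    rw [← MemLp.toLp_add (hL2 T) (hL2 T')]
    exact MemLp.toLp_congr _ _ (by filter_upwards with x; simp)
  map_smul' c T := by
    rw [RingHom.id_apply, ← MemLp.toLp_const_smul c (hL2 T)]
    exact MemLp.toLp_congr (hL2 (c • T)) ((hL2 T).const_smul c)
      (by filter_upwards with x; simp)

lemma Phi_apply (hL2 : ∀ T : E →L[ℝ] ℝ, MemLp (fun x => T x) 2 ν) (T : E →L[ℝ] ℝ) :
    Phi ν hL2 T = (hL2 T).toLp _ := rfl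

lemma Phi_bound (hL2 : ∀ T : E →L[ℝ] ℝ, MemLp (fun x => T x) 2 ν) :
    ∃ C : ℝ, 0 ≤ C ∧ ∀ T : E →L[ℝ] ℝ, ‖(hL2 T).toLp _‖ ≤ C * ‖T‖ := by
  have hcont : Continuous (Phi ν hL2) := by
    apply (Phi ν hL2).continuous_of_seq_closed_graph
    intro u T y hu hy
    have haes : ∀ n, AEStronglyMeasurable (fun x => u n x) ν := fun n => (hL2 (u n)).1
    have htm : TendstoInMeasure ν (fun n x => u n x) atTop (fun x => (y : E → ℝ) x) := by
      apply tendstoInMeasure_of_tendsto_eLpNorm (p := 2) two_ne_zero haes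
        (Lp.aestronglyMeasurable y)
      have h0 := (Lp.tendsto_Lp_iff_tendsto_eLpNorm' (fun n => (Phi ν hL2) (u n)) y).mp hy
      refine (Filter.tendsto_congr fun n => ?_).mp h0
      exact eLpNorm_congr_ae (((hL2 (u n)).coeFn_toLp).sub EventuallyEq.rfl)
    obtain ⟨ns, hns, hae⟩ := htm.exists_seq_tendsto_ae
    have hptw : ∀ x, Tendsto (fun i => u (ns i) x) atTop (𝓝 (T x)) := by
      intro x
      have h1 : Tendsto (fun n => u n x) atTop (𝓝 (T x)) :=
        ((ContinuousLinearMap.apply ℝ ℝ x).continuous.tendsto T).comp hu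
      exact h1.comp hns.tendsto_atTop
    have hae2 : (fun x => T x) =ᵐ[ν] (y : E → ℝ) := by
      filter_upwards [hae] with x hx
      exact tendsto_nhds_unique (hptw x) hx
    have : (hL2 T).toLp _ = (Lp.memLp y).toLp _ :=
      ((hL2 T).toLp_eq_toLp_iff (Lp.memLp y)).mpr hae2
    rw [Lp.toLp_coeFn y (Lp.memLp y)] at this
    exact this.symm
  let Phic : (E →L[ℝ] ℝ) →L[ℝ] Lp ℝ 2 ν := ⟨Phi ν hL2, hcont⟩
  exact ⟨‖Phic‖, ContinuousLinearMap.opNorm_nonneg _, fun T => Phic.le_opNorm T⟩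



-- tail elements and their convergence
lemma tail_memLp (f : Lp ℝ 2 ν) (n : ℕ) :
    MemLp ((Metric.closedBall (0:E) n)ᶜ.indicator (fun x => (f x : ℝ))) 2 ν :=
  MemLp.indicator (measurableSet_closedBall.compl) (Lp.memLp f)

lemma tail_norm_sq (f : Lp ℝ 2 ν) (n : ℕ) :
    ‖(tail_memLp ν f n).toLp _‖ ^ 2
      = ∫ x, ((Metric.closedBall (0:E) n)ᶜ.indicator (fun x => (f x)^2)) x ∂ν := by
  rw [← real_inner_self_eq_norm_sq, L2.inner_def]
  refine integral_congr_ae ?_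
  filter_upwards [(tail_memLp ν f n).coeFn_toLp] with x hx
  rw [RCLike.inner_apply, conj_trivial, hx]
  by_cases h : x ∈ (Metric.closedBall (0:E) n)ᶜ
  · simp [Set.indicator_of_mem h, sq]
  · simp [Set.indicator_of_notMem h]

lemma tail_mono (f : Lp ℝ 2 ν) {m n : ℕ} (h : m ≤ n) :
    ‖(tail_memLp ν f n).toLp _‖ ≤ ‖(tail_memLp ν f m).toLp _‖ := by
  have hball : Metric.closedBall (0:E) m ⊆ Metric.closedBall (0:E) n :=
    Metric.closedBall_subset_closedBall (by exact_mod_cast h)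
  have hint : ∀ k : ℕ, Integrable ((Metric.closedBall (0:E) k)ᶜ.indicator
      (fun x => (f x : ℝ)^2)) ν := by
    intro k
    refine (Integrable.indicator ?_ measurableSet_closedBall.compl)
    have := L2.integrable_inner (𝕜 := ℝ) f f
    refine this.congr (by filter_upwards with x; simp [RCLike.inner_apply, conj_trivial, sq])
  have h2 : ‖(tail_memLp ν f n).toLp _‖ ^ 2 ≤ ‖(tail_memLp ν f m).toLp _‖ ^ 2 := by
    rw [tail_norm_sq, tail_norm_sq]
    refine integral_mono (hint n) (hint m) ?_
    intro x
    by_cases hx : x ∈ (Metric.closedBall (0:E) n)ᶜ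
    · rw [Set.indicator_of_mem hx,
        Set.indicator_of_mem (show x ∈ (Metric.closedBall (0:E) m)ᶜ from fun hc => hx (hball hc))]
    · rw [Set.indicator_of_notMem hx]
      exact Set.indicator_apply_nonneg (fun _ => sq_nonneg _)
  exact (pow_le_pow_iff_left₀ (norm_nonneg _) (norm_nonneg _) two_ne_zero).mp h2

lemma tail_tendsto (f : Lp ℝ 2 ν) :
    Tendsto (fun n : ℕ => ‖(tail_memLp ν f n).toLp _‖) atTop (𝓝 0) := by
  have hsq : Tendsto (fun n : ℕ => ‖(tail_memLp ν f n).toLp _‖ ^ 2) atTop (𝓝 0) := by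
    have hint : Integrable (fun x => (f x : ℝ)^2) ν := by
      have := L2.integrable_inner (𝕜 := ℝ) f f
      refine this.congr (by filter_upwards with x; simp [RCLike.inner_apply, conj_trivial, sq])
    have := tendsto_integral_of_dominated_convergence (F := fun (n : ℕ) x =>
        ((Metric.closedBall (0:E) n)ᶜ.indicator (fun x => (f x : ℝ)^2)) x)
        (f := fun _ => (0:ℝ)) (bound := fun x => (f x : ℝ)^2)
        ?_ hint ?_ ?_
    · simp only [integral_zero] at this
      refine Tendsto.congr (fun n => (tail_norm_sq ν f n).symm) this
    · intro n
      exact ((hint.aestronglyMeasurable).indicator measurableSet_closedBall.compl)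
    · intro n
      filter_upwards with x
      by_cases hx : x ∈ (Metric.closedBall (0:E) n)ᶜ
      · rw [Set.indicator_of_mem hx, Real.norm_eq_abs, abs_of_nonneg (sq_nonneg _)]
      · rw [Set.indicator_of_notMem hx, norm_zero]; exact sq_nonneg _
    · filter_upwards with x
      have : ∀ᶠ n : ℕ in atTop, ((Metric.closedBall (0:E) n)ᶜ.indicator
          (fun x => (f x : ℝ)^2)) x = 0 := by
        filter_upwards [eventually_ge_atTop ⌈‖x‖⌉₊] with n hn
        have : x ∈ Metric.closedBall (0:E) n := by
          rw [Metric.mem_closedBall, dist_zero_right]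
          exact le_trans (Nat.le_ceil _) (by exact_mod_cast hn)
        simp [Set.indicator_of_notMem, this]
      exact Tendsto.congr' (this.mono fun n hn => hn.symm) tendsto_const_nhds
  have h0 : ∀ n : ℕ, ‖(tail_memLp ν f n).toLp _‖ = Real.sqrt (‖(tail_memLp ν f n).toLp _‖^2) := by
    intro n; rw [Real.sqrt_sq (norm_nonneg _)]
  have h2 := hsq.sqrt
  rw [Real.sqrt_zero] at h2
  exact Tendsto.congr (fun n => (h0 n).symm) h2


lemma exists_pettis (hL2 : ∀ T : E →L[ℝ] ℝ, MemLp (fun x => T x) 2 ν) (f : Lp ℝ 2 ν) :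
    ∃ h : E, ∀ K : E →L[ℝ] ℝ, K h = ∫ x, K x * f x ∂ν := by
  obtain ⟨C, hC0, hC⟩ := Phi_bound ν hL2
  set s : ℕ → Set E := fun n => Metric.closedBall (0:E) n with hs
  have hsm : ∀ n, MeasurableSet (s n) := fun n => measurableSet_closedBall
  have hfi : Integrable (fun x => (f x : ℝ)) ν := (Lp.memLp f).integrable one_le_two
  have hint : ∀ n, Integrable ((s n).indicator (fun x => f x • x)) ν := by
    intro n
    rw [integrable_indicator_iff (hsm n)]
    refine Integrable.mono' ((hfi.abs.const_mul (n:ℝ)).restrict) ?_ ?_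
    · exact ((Lp.aestronglyMeasurable f).smul aestronglyMeasurable_id).restrict
    · filter_upwards [ae_restrict_mem (hsm n)] with x hx
      have hxn : ‖x‖ ≤ n := by rwa [Metric.mem_closedBall, dist_zero_right] at hx
      rw [norm_smul]
      calc ‖f x‖ * ‖x‖ ≤ ‖f x‖ * n := mul_le_mul_of_nonneg_left hxn (norm_nonneg _)
        _ = (n:ℝ) * |f x| := by rw [Real.norm_eq_abs, mul_comm]
  set eI : ℕ → E := fun n => ∫ x, (s n).indicator (fun x => f x • x) x ∂ν with heI
  have hKint : ∀ K : E →L[ℝ] ℝ, Integrable (fun x => K x * f x) ν :=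
    fun K => integrable_mul ν K (hL2 K) f
  have hKeI : ∀ (n) (K : E →L[ℝ] ℝ),
      K (eI n) = ∫ x, (s n).indicator (fun x => K x * f x) x ∂ν := by
    intro n K
    rw [show K (eI n) = ∫ x, K ((s n).indicator (fun x => f x • x) x) ∂ν from
      (ContinuousLinearMap.integral_comp_comm K (hint n)).symm]
    refine integral_congr_ae (Eventually.of_forall fun x => ?_)
    by_cases hx : x ∈ s n
    · simp [Set.indicator_of_mem hx, mul_comm]
    · simp [Set.indicator_of_notMem hx]
  have tailb : ∀ (n : ℕ) (K : E →L[ℝ] ℝ),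
      |K (eI n) - ∫ x, K x * f x ∂ν| ≤ (C * ‖K‖) * ‖(tail_memLp ν f n).toLp _‖ := by
    intro n K
    have hsplit : ∫ x, K x * f x ∂ν
        = (∫ x in s n, K x * f x ∂ν) + ∫ x in (s n)ᶜ, K x * f x ∂ν :=
      (integral_add_compl (hsm n) (hKint K)).symm
    rw [hKeI n K, integral_indicator (hsm n), hsplit,
      show ∀ a b : ℝ, a - (a + b) = -b from fun a b => by ring, abs_neg]
    calc |∫ x in (s n)ᶜ, K x * f x ∂ν| ≤ ∫ x in (s n)ᶜ, |K x * f x| ∂ν := by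
          rw [← Real.norm_eq_abs]
          exact (norm_integral_le_integral_norm _).trans
            (le_of_eq (by simp [Real.norm_eq_abs, abs_mul]))
      _ = ∫ x, |((hL2 K).toLp _ : E → ℝ) x * ((tail_memLp ν f n).toLp _ : E → ℝ) x| ∂ν := by
          rw [← integral_indicator (hsm n).compl]
          refine integral_congr_ae ?_
          filter_upwards [(tail_memLp ν f n).coeFn_toLp, (hL2 K).coeFn_toLp] with x h1 h2
          rw [h1, h2]
          by_cases hx : x ∈ (s n)ᶜ
          · rw [Set.indicator_of_mem hx, Set.indicator_of_mem hx]
          · rw [Set.indicator_of_notMem hx, Set.indicator_of_notMem hx, mul_zero, abs_zero]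
      _ ≤ ‖(hL2 K).toLp _‖ * ‖(tail_memLp ν f n).toLp _‖ := integral_abs_mul_le ν _ _
      _ ≤ (C * ‖K‖) * ‖(tail_memLp ν f n).toLp _‖ :=
          mul_le_mul_of_nonneg_right (hC K) (norm_nonneg _)
  have hcauchy : CauchySeq eI := by
    apply cauchySeq_of_le_tendsto_0 (fun N => (C * 2) * ‖(tail_memLp ν f N).toLp _‖)
    · intro n m N hn hm
      rw [dist_eq_norm]
      refine NormedSpace.norm_le_dual_bound ℝ _ (by positivity) fun K => ?_
      rw [map_sub, Real.norm_eq_abs]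
      calc |K (eI n) - K (eI m)|
          ≤ |K (eI n) - ∫ x, K x * f x ∂ν| + |K (eI m) - ∫ x, K x * f x ∂ν| := by
            rw [show K (eI n) - K (eI m)
              = (K (eI n) - ∫ x, K x * f x ∂ν) - (K (eI m) - ∫ x, K x * f x ∂ν) by ring]
            exact abs_sub _ _
        _ ≤ (C * ‖K‖) * ‖(tail_memLp ν f n).toLp _‖
            + (C * ‖K‖) * ‖(tail_memLp ν f m).toLp _‖ := add_le_add (tailb n K) (tailb m K)
        _ ≤ (C * ‖K‖) * ‖(tail_memLp ν f N).toLp _‖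
            + (C * ‖K‖) * ‖(tail_memLp ν f N).toLp _‖ := by
            have h1 := tail_mono ν f hn
            have h2 := tail_mono ν f hm
            have hck : 0 ≤ C * ‖K‖ := by positivity
            exact add_le_add (mul_le_mul_of_nonneg_left h1 hck)
              (mul_le_mul_of_nonneg_left h2 hck)
        _ = (C * 2) * ‖(tail_memLp ν f N).toLp _‖ * ‖K‖ := by ring
    · have := (tail_tendsto ν f).const_mul (C * 2)
      simpa using this
  obtain ⟨h, hh⟩ := cauchySeq_tendsto_of_complete hcauchy
  refine ⟨h, fun K => ?_⟩
  have h1 : Tendsto (fun n => K (eI n)) atTop (𝓝 (K h)) :=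
    (K.continuous.tendsto h).comp hh
  have h2 : Tendsto (fun n => K (eI n)) atTop (𝓝 (∫ x, K x * f x ∂ν)) := by
    rw [← tendsto_sub_nhds_zero_iff]
    have hlim : Tendsto (fun n : ℕ => (C * ‖K‖) * ‖(tail_memLp ν f n).toLp _‖)
        atTop (𝓝 0) := by
      have := (tail_tendsto ν f).const_mul (C * ‖K‖)
      simpa using this
    refine squeeze_zero_norm (fun n => ?_) hlim
    rw [Real.norm_eq_abs]
    exact tailb n K
  exact tendsto_nhds_unique h1 h2


end CMaux

/-- The set of values `T h` over continuous linear functionals `T` with `∫ T² dν ≤ 1`;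
its supremum is the Cameron–Martin norm of `h` and the Cameron–Martin space `H(ν)` consists
of those `h` for which this set is bounded above. -/
def cmSet (ν : Measure E) (h : E) : Set ℝ :=
  {r : ℝ | ∃ T : E →L[ℝ] ℝ, (∫ x, (T x) ^ 2 ∂ν) ≤ 1 ∧ r = T h}

/-- For a centred Gaussian measure `ν` on a separable Banach space, the map `R_ν`, defined on
the reproducing kernel Hilbert space (the closure of the dual in `L²(ν)`) by
`K (R_ν f) = ∫ K ψ · f ψ dν ψ` for all `K` in the dual, is an isometric isomorphism onto the
Cameron–Martin space `H(ν)` (with its norm `‖h‖ = sSup (cmSet ν h)`). -/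
theorem cameronMartin_isometric_iso
    (ν : Measure E) [IsProbabilityMeasure ν]
    (hGauss : ∀ T : E →L[ℝ] ℝ, ∃ v : NNReal, ν.map T = ProbabilityTheory.gaussianReal 0 v)
    (hL2 : ∀ T : E →L[ℝ] ℝ, MemLp (fun x => T x) 2 ν) :
    ∃ R : Lp ℝ 2 ν → E,
      Set.InjOn R (closure (Set.range fun T : E →L[ℝ] ℝ => (hL2 T).toLp _)) ∧
      R '' (closure (Set.range fun T : E →L[ℝ] ℝ => (hL2 T).toLp _)) =
        {h : E | BddAbove (cmSet ν h)} ∧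
      (∀ f ∈ closure (Set.range fun T : E →L[ℝ] ℝ => (hL2 T).toLp _),
        ∀ K : E →L[ℝ] ℝ, K (R f) = ∫ x, K x * f x ∂ν) ∧
      (∀ f ∈ closure (Set.range fun T : E →L[ℝ] ℝ => (hL2 T).toLp _),
        sSup (cmSet ν (R f)) = ‖f‖) := by
  classical
  set g : (E →L[ℝ] ℝ) → Lp ℝ 2 ν := fun T => (hL2 T).toLp _ with hgdef
  choose R hR using fun f => CMaux.exists_pettis ν hL2 f
  -- hR : ∀ f K, K (R f) = ∫ x, K x * f x ∂ν
  have hPhi : ∀ T, CMaux.Phi ν hL2 T = g T := fun T => rfl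
  have hinner : ∀ (T : E →L[ℝ] ℝ) (f : Lp ℝ 2 ν),
      (inner ℝ (g T) f : ℝ) = ∫ x, T x * f x ∂ν := fun T f => CMaux.inner_toLp ν hL2 T f
  have hnormsq : ∀ T : E →L[ℝ] ℝ, ‖g T‖ ^ 2 = ∫ x, (T x) ^ 2 ∂ν :=
    fun T => CMaux.norm_sq_toLp ν hL2 T
  have hRinner : ∀ (f : Lp ℝ 2 ν) (T : E →L[ℝ] ℝ), T (R f) = (inner ℝ (g T) f : ℝ) := by
    intro f T; rw [hR f T, hinner]
  -- 0 is in every cmSet of the form cmSet ν (R f) and more generally cmSet ν h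
  have hzero : ∀ h : E, (0:ℝ) ∈ cmSet ν h := by
    intro h
    exact ⟨0, by simp, by simp⟩
  -- upper bound for cmSet ν (R f)
  have hub : ∀ (f : Lp ℝ 2 ν), ∀ r ∈ cmSet ν (R f), r ≤ ‖f‖ := by
    rintro f r ⟨T, hT1, rfl⟩
    have hTn : ‖g T‖ ≤ 1 := by
      have h2 : ‖g T‖ ^ 2 ≤ 1 := by rw [hnormsq]; exact hT1
      nlinarith [norm_nonneg (g T)]
    rw [hRinner f T]
    calc (inner ℝ (g T) f : ℝ) ≤ ‖g T‖ * ‖f‖ := real_inner_le_norm _ _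
      _ ≤ 1 * ‖f‖ := mul_le_mul_of_nonneg_right hTn (norm_nonneg _)
      _ = ‖f‖ := one_mul _
  have hbdd : ∀ f : Lp ℝ 2 ν, BddAbove (cmSet ν (R f)) := fun f => ⟨‖f‖, hub f⟩
  refine ⟨R, ?_, ?_, fun f _ K => hR f K, ?_⟩
  · -- injectivity on the closure
    intro f hf f' hf' heq
    have hz : ∀ T : E →L[ℝ] ℝ, (inner ℝ (g T) (f - f') : ℝ) = 0 := by
      intro T
      rw [inner_sub_right, ← hRinner f T, ← hRinner f' T, heq, sub_self]
    have hcl : ∀ u ∈ closure (Set.range g), (inner ℝ u (f - f') : ℝ) = 0 := by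
      intro u hu
      have hclosed : IsClosed {u : Lp ℝ 2 ν | (inner ℝ u (f - f') : ℝ) = 0} :=
        isClosed_eq (Continuous.inner continuous_id continuous_const) continuous_const
      refine closure_minimal ?_ hclosed hu
      rintro u ⟨T, rfl⟩
      exact hz T
    -- f - f' lies in the closure of the range (a submodule), hence is orthogonal to itself
    have hW : closure (Set.range g) = ((LinearMap.range (CMaux.Phi ν hL2)).topologicalClosure :
        Set (Lp ℝ 2 ν)) := by
      rw [Submodule.topologicalClosure_coe, LinearMap.coe_range]
      rfl
    have hmem : f - f' ∈ closure (Set.range g) := by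
      rw [hW] at hf hf' ⊢
      exact Submodule.sub_mem _ hf hf'
    have := hcl _ hmem
    rw [inner_self_eq_zero, sub_eq_zero] at this
    exact this
  · -- image equals Cameron–Martin space
    ext h
    constructor
    · rintro ⟨f, hf, rfl⟩
      exact ⟨‖f‖, hub f⟩
    · intro hh
      have hM0 : (0:ℝ) ≤ sSup (cmSet ν h) := le_csSup hh (hzero h)
      set M := sSup (cmSet ν h) with hMdef
      -- well-definedness
      have wd : ∀ T T' : E →L[ℝ] ℝ, g T = g T' → T h = T' h := by
        intro T T' he
        by_contra hne
        have hgz : g (T - T') = 0 := by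
          rw [← hPhi, map_sub, hPhi, hPhi, he, sub_self]
        have hz2 : ∫ x, ((T - T') x)^2 ∂ν = 0 := by
          rw [← hnormsq, hgz, norm_zero]
          norm_num
        have hmem : ∀ c : ℝ, c * ((T - T') h) ∈ cmSet ν h := by
          intro c
          refine ⟨c • (T - T'), ?_, ?_⟩
          · have : ∀ x : E, ((c • (T - T')) x)^2 = c^2 * (((T - T') x)^2) := by
              intro x
              simp [mul_pow]
            rw [funext this, integral_const_mul, hz2, mul_zero]
            norm_num
          · simp
        obtain ⟨M', hM'⟩ := hh
        have hd : (T - T') h ≠ 0 := by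
          simpa [ContinuousLinearMap.sub_apply, sub_eq_zero] using hne
        have h1 := hM' (hmem ((|M'| + 1) / ((T - T') h)))
        rw [div_mul_cancel₀ _ hd] at h1
        have h2 := le_abs_self M'
        linarith
      -- the subspace and the bounded functional
      set Vs : Subspace ℝ (Lp ℝ 2 ν) := LinearMap.range (CMaux.Phi ν hL2) with hVs
      set sel : ↥Vs → (E →L[ℝ] ℝ) := fun w => (LinearMap.mem_range.mp w.2).choose with hseldef
      have hselspec : ∀ w : ↥Vs, CMaux.Phi ν hL2 (sel w) = ↑w :=
        fun w => (LinearMap.mem_range.mp w.2).choose_spec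
      have hkey' : ∀ (w : ↥Vs) (T : E →L[ℝ] ℝ), g T = ↑w → sel w h = T h := by
        intro w T hT
        refine wd _ _ ?_
        rw [← hPhi, hselspec w, ← hT]
      have hl : ∀ S : E →L[ℝ] ℝ, ‖g S‖ ≤ 1 → S h ≤ M := by
        intro S hS
        refine le_csSup hh ⟨S, ?_, rfl⟩
        rw [← hnormsq]
        nlinarith [norm_nonneg (g S)]
      have hbound : ∀ w : ↥Vs, |sel w h| ≤ M * ‖w‖ := by
        intro w
        by_cases h0 : ‖(w : Lp ℝ 2 ν)‖ = 0
        · have : (w : Lp ℝ 2 ν) = 0 := norm_eq_zero.mp h0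
          have hz : g (sel w) = (0 : Lp ℝ 2 ν) := by rw [← hPhi, hselspec w, this]
          have : sel w h = (0 : E →L[ℝ] ℝ) h := wd _ _ (by rw [hz, ← hPhi, map_zero])
          rw [this]
          simp [mul_nonneg hM0 (norm_nonneg _)]
        · have hpos : 0 < ‖(w : Lp ℝ 2 ν)‖ := lt_of_le_of_ne (norm_nonneg _) (Ne.symm h0)
          set c : ℝ := ‖(w : Lp ℝ 2 ν)‖⁻¹ with hcdef
          have hc0 : 0 < c := inv_pos.mpr hpos
          have hgsel : g (sel w) = ↑w := by rw [← hPhi]; exact hselspec w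
          have hn1 : ‖g (c • sel w)‖ = 1 := by
            rw [← hPhi, _root_.map_smul, hPhi, hgsel, norm_smul, Real.norm_eq_abs,
              abs_of_pos hc0, hcdef, inv_mul_cancel₀ h0]
          have hp1 : (c • sel w) h ≤ M := hl _ (le_of_eq hn1)
          have hn2 : ‖g (-(c • sel w))‖ = 1 := by
            rw [← hPhi, map_neg, hPhi, norm_neg, hn1]
          have hp2 : (-(c • sel w)) h ≤ M := hl _ (le_of_eq hn2)
          have habs : |c * sel w h| ≤ M := by
            rw [abs_le]
            constructor
            · have : -(c * sel w h) ≤ M := by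
                simpa [ContinuousLinearMap.smul_apply, smul_eq_mul] using hp2
              linarith
            · simpa [ContinuousLinearMap.smul_apply, smul_eq_mul] using hp1
          have heq : |sel w h| = ‖(w : Lp ℝ 2 ν)‖ * |c * sel w h| := by
            rw [abs_mul, hcdef, abs_of_pos (inv_pos.mpr hpos), ← mul_assoc,
              mul_inv_cancel₀ h0, one_mul]
          rw [heq]
          calc ‖(w : Lp ℝ 2 ν)‖ * |c * sel w h| ≤ ‖(w : Lp ℝ 2 ν)‖ * M :=
                mul_le_mul_of_nonneg_left habs (norm_nonneg _)
            _ = M * ‖w‖ := by rw [mul_comm]; rfl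
      -- the linear functional on Vs
      set l : ↥Vs →ₗ[ℝ] ℝ :=
        { toFun := fun w => sel w h
          map_add' := by
            intro w w'
            show sel (w + w') h = sel w h + sel w' h
            have h1 : g (sel w + sel w') = ↑(w + w') := by
              rw [← hPhi, map_add, hselspec w, hselspec w']
              rfl
            rw [hkey' (w + w') _ h1]
            simp
          map_smul' := by
            intro c w
            show sel (c • w) h = c • (sel w h)
            have h1 : g (c • sel w) = ↑(c • w) := by
              rw [← hPhi, _root_.map_smul, hselspec w]
              rfl
            rw [hkey' (c • w) _ h1]
            simp } with hldef
      have hlb : ∀ w : ↥Vs, ‖l w‖ ≤ M * ‖w‖ := by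
        intro w
        rw [Real.norm_eq_abs]
        exact hbound w
      set φ : ↥Vs →L[ℝ] ℝ := LinearMap.mkContinuous l M hlb with hφdef
      obtain ⟨ψ, hψ, -⟩ := exists_extension_norm_eq Vs φ
      set f₀ : Lp ℝ 2 ν := (InnerProductSpace.toDual ℝ (Lp ℝ 2 ν)).symm ψ with hf₀def
      have hf₀ : ∀ x : Lp ℝ 2 ν, (inner ℝ f₀ x : ℝ) = ψ x := by
        intro x
        rw [← InnerProductSpace.toDual_apply_apply, hf₀def, LinearIsometryEquiv.apply_symm_apply]
      set W : Submodule ℝ (Lp ℝ 2 ν) := Vs.topologicalClosure with hWdef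
      haveI : CompleteSpace W := (Submodule.isClosed_topologicalClosure Vs).completeSpace_coe
      set f : Lp ℝ 2 ν := ↑(W.orthogonalProjectionOnto f₀) with hfdef
      have hfS : f ∈ closure (Set.range g) := by
        have h1 : f ∈ (W : Set (Lp ℝ 2 ν)) := (W.orthogonalProjectionOnto f₀).2
        have h2 : (W : Set (Lp ℝ 2 ν)) = closure (Set.range g) := by
          rw [hWdef, Submodule.topologicalClosure_coe, hVs, LinearMap.coe_range]
          rfl
        rwa [h2] at h1
      have hinnerf : ∀ T : E →L[ℝ] ℝ, (inner ℝ (g T) f : ℝ) = T h := by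
        intro T
        have hmemW : g T ∈ W := by
          apply Vs.le_topologicalClosure
          exact ⟨T, rfl⟩
        have ho := W.starProjection_inner_eq_zero f₀ (g T) hmemW
        have h1 : (inner ℝ f₀ (g T) : ℝ) = (inner ℝ f (g T) : ℝ) := by
          have := ho
          rw [inner_sub_left, sub_eq_zero] at this
          exact this
        have h2 : (inner ℝ (g T) f : ℝ) = (inner ℝ f₀ (g T) : ℝ) := by
          rw [real_inner_comm, h1]
        rw [h2, hf₀]
        have hmemVs : g T ∈ Vs := ⟨T, rfl⟩
        have h3 : ψ (g T) = φ ⟨g T, hmemVs⟩ := hψ ⟨g T, hmemVs⟩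
        rw [h3]
        have h4 : φ ⟨g T, hmemVs⟩ = sel ⟨g T, hmemVs⟩ h := rfl
        rw [h4]
        exact hkey' ⟨g T, hmemVs⟩ T rfl
      have hRf : R f = h := by
        have : ∀ K : StrongDual ℝ E, K (R f - h) = 0 := by
          intro K
          rw [map_sub, hRinner f K, hinnerf K, sub_self]
        have := NormedSpace.eq_zero_of_forall_dual_eq_zero ℝ this
        rwa [sub_eq_zero] at this
      exact ⟨f, hfS, hRf⟩
  · -- the norm identity
    intro f hf
    refine le_antisymm (csSup_le ⟨0, hzero _⟩ (hub f)) ?_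
    -- lower bound
    refine le_of_forall_pos_le_add ?_
    intro ε hε
    by_cases hfε : ‖f‖ ≤ ε
    · calc ‖f‖ ≤ ε := hfε
        _ ≤ sSup (cmSet ν (R f)) + ε := le_add_of_nonneg_left (le_csSup (hbdd f) (hzero _))
    · push_neg at hfε
      have hfpos : 0 < ‖f‖ := lt_trans hε hfε
      -- choose T with ‖g T - f‖ < ε/2
      have : ∃ T : E →L[ℝ] ℝ, ‖g T - f‖ < ε/2 := by
        have := Metric.mem_closure_iff.mp hf (ε/2) (by linarith)
        obtain ⟨u, ⟨T, rfl⟩, hu⟩ := this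
        exact ⟨T, by rwa [dist_comm, dist_eq_norm] at hu⟩
      obtain ⟨T, hT⟩ := this
      have hgT_lb : ‖f‖ - ε/2 ≤ ‖g T‖ := by
        have h2 : ‖f‖ - ‖g T‖ ≤ ‖f - g T‖ := norm_sub_norm_le f (g T)
        have h3 : ‖f - g T‖ = ‖g T - f‖ := norm_sub_rev _ _
        linarith
      have hgTpos : 0 < ‖g T‖ := by linarith
      have hgT_ub : ‖g T‖ ≤ ‖f‖ + ε/2 := by
        calc ‖g T‖ = ‖g T - f + f‖ := by rw [sub_add_cancel]
          _ ≤ ‖g T - f‖ + ‖f‖ := norm_add_le _ _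
          _ ≤ ε/2 + ‖f‖ := by linarith
          _ = ‖f‖ + ε/2 := by ring
      set c : ℝ := ‖g T‖⁻¹ with hcdef
      have hc0 : 0 < c := inv_pos.mpr hgTpos
      have hc1 : c * ‖g T‖ = 1 := inv_mul_cancel₀ (ne_of_gt hgTpos)
      -- the candidate functional c • T
      have hgc : g (c • T) = c • g T := by rw [← hPhi, _root_.map_smul, hPhi]
      have hmem : c * (inner ℝ (g T) f : ℝ) ∈ cmSet ν (R f) := by
        refine ⟨c • T, ?_, ?_⟩
        · have h6 : ‖g (c • T)‖ ^ 2 = 1 := by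
            rw [hgc, norm_smul, Real.norm_eq_abs, abs_of_pos hc0, hc1]
            norm_num
          rw [← hnormsq, h6]
        · rw [hRinner f (c • T), hgc, real_inner_smul_left]
      have hip_lb : (inner ℝ (g T) f : ℝ) ≥ ‖f‖^2 - (ε/2) * ‖f‖ := by
        have h1 : (inner ℝ (g T) f : ℝ) = (inner ℝ f f : ℝ) + (inner ℝ (g T - f) f : ℝ) := by
          rw [← inner_add_left]
          norm_num
        have h2 : (inner ℝ (g T - f) f : ℝ) ≥ -(‖g T - f‖ * ‖f‖) := by
          have := real_inner_le_norm (g T - f) (-f)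
          have h3 := real_inner_le_norm (-(g T - f)) f
          rw [inner_neg_left, norm_neg] at h3
          linarith
        have h4 : ‖g T - f‖ * ‖f‖ ≤ (ε/2) * ‖f‖ :=
          mul_le_mul_of_nonneg_right (le_of_lt hT) (norm_nonneg _)
        rw [h1, real_inner_self_eq_norm_sq]
        linarith
      have hval_lb : ‖f‖ - ε ≤ c * (inner ℝ (g T) f : ℝ) := by
        have hA : (‖f‖ - ε) * ‖g T‖ ≤ ‖f‖^2 - (ε/2) * ‖f‖ := by
          nlinarith [hgT_ub, hfε, hε, norm_nonneg f]
        have h5 : (‖f‖ - ε) = ((‖f‖ - ε) * ‖g T‖) * c := by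
          rw [mul_assoc, mul_comm ‖g T‖ c, hc1, mul_one]
        rw [h5]
        calc ((‖f‖ - ε) * ‖g T‖) * c ≤ (‖f‖^2 - (ε/2) * ‖f‖) * c :=
              mul_le_mul_of_nonneg_right hA (le_of_lt hc0)
          _ ≤ (inner ℝ (g T) f : ℝ) * c := mul_le_mul_of_nonneg_right hip_lb (le_of_lt hc0)
          _ = c * (inner ℝ (g T) f : ℝ) := mul_comm _ _
      have := le_csSup (hbdd f) hmem
      linarith
end
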